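/- Strong soundness and completeness of WF_[→] with respect to neighborhood models: for every set Σ of L_[→]-formulas and every L_[→]-formula A, Σ ⊢_{WF_[→]} A if and only if Σ ⊨_{WF_[→]} A. -/

import Mathlib

/-- Implicational formulas: built from propositional variables using only `→`. -/
inductive Fm : Type
  | var : ℕ → Fm
  | imp : Fm → Fm → Fm

/-- `chain [A₁,…,Aₙ] E` is the formula `A₁→(A₂→(⋯→(Aₙ→E)⋯))` (and `E` when n = 0). -/
def chain : List Fm → Fm → Fm
  | [], E => E
  | A :: L, E => Fm.imp A (chain L E)

/-- Theorems of the Hilbert system `WF_[→]`. -/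
inductive WFThm : Fm → Prop
  | id (A : Fm) : WFThm (A.imp A)
  | mp {A B : Fm} : WFThm A → WFThm (A.imp B) → WFThm B
  | afort {A : Fm} (B : Fm) : WFThm A → WFThm (B.imp A)
  | trans {A B C : Fm} : WFThm (A.imp B) → WFThm (B.imp C) → WFThm (A.imp C)
  | equiv {A B C D : Fm} :
      WFThm (A.imp B) → WFThm (B.imp A) → WFThm (C.imp D) → WFThm (D.imp C) →
      WFThm ((A.imp C).imp (B.imp D))

/-- Derivations from assumptions in `WF_[→]`: members of `Γ` and theorems may be used;
rules (3), (4) and (5) only apply to theorems; modus ponens only with a theorem major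
premise. -/
inductive WFDeriv (Γ : Set Fm) : Fm → Prop
  | hyp {A : Fm} : A ∈ Γ → WFDeriv Γ A
  | thm {A : Fm} : WFThm A → WFDeriv Γ A
  | wmp {A B : Fm} : WFDeriv Γ A → WFThm (A.imp B) → WFDeriv Γ B

/-- `[→]`-neighborhood models of subintuitionistic logic. -/
structure NbModel where
  W : Type
  g : W
  NB : W → Set (Set W × Set W)
  sub : ∀ (w : W) (X Y : Set W), X ⊆ Y → (X, Y) ∈ NB w
  rootNB : ∀ X Y : Set W, (X, Y) ∈ NB g ↔ X ⊆ Y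
  V : ℕ → W → Prop

/-- The truth set of a formula in a `[→]`-neighborhood model. -/
def truthSet (M : NbModel) : Fm → Set M.W
  | Fm.var p => {w | M.V p w}
  | Fm.imp A B => {w | (truthSet M A, truthSet M B) ∈ M.NB w}

lemma mem_truthSet_imp {M : NbModel} {A B : Fm} {w : M.W} :
    w ∈ truthSet M (Fm.imp A B) ↔ (truthSet M A, truthSet M B) ∈ M.NB w := Iff.rfl

/-- Theorems of `WF_[→]` hold at every world of every model. -/
lemma thm_valid {A : Fm} (h : WFThm A) (M : NbModel) : ∀ w, w ∈ truthSet M A := by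
  induction h with
  | id A => exact fun w => M.sub w _ _ (le_refl _)
  | mp hA hAB ihA ihAB =>
    intro w
    exact (M.rootNB _ _).1 (ihAB M.g) (ihA w)
  | afort B hA ih => exact fun w => M.sub w _ _ (fun v _ => ih v)
  | trans h1 h2 ih1 ih2 =>
    intro w
    exact M.sub w _ _ (((M.rootNB _ _).1 (ih1 M.g)).trans ((M.rootNB _ _).1 (ih2 M.g)))
  | @equiv P Q R T h1 h2 h3 h4 ih1 ih2 ih3 ih4 =>
    intro w
    have e1 : truthSet M P = truthSet M Q :=
      Set.Subset.antisymm ((M.rootNB _ _).1 (ih1 M.g)) ((M.rootNB _ _).1 (ih2 M.g))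
    have e2 : truthSet M R = truthSet M T :=
      Set.Subset.antisymm ((M.rootNB _ _).1 (ih3 M.g)) ((M.rootNB _ _).1 (ih4 M.g))
    have e : truthSet M (Fm.imp P R) = truthSet M (Fm.imp Q T) := by
      show {v | _ ∈ M.NB v} = {v | _ ∈ M.NB v}
      rw [e1, e2]
    exact M.sub w _ _ (le_of_eq e)

def IsTheory (Δ : Set Fm) : Prop :=
  (∀ A, WFThm A → A ∈ Δ) ∧ ∀ A B, A ∈ Δ → WFThm (A.imp B) → B ∈ Δ

abbrev Th := {Δ : Set Fm // IsTheory Δ}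

abbrev canW := Option Th

def canNB : canW → Set (Set canW × Set canW)
  | none => {p | p.1 ⊆ p.2}
  | some Δ => {p | p.1 ⊆ p.2 ∨ ∃ B C, Fm.imp B C ∈ Δ.1 ∧
      (∀ Δ' : Th, some Δ' ∈ p.1 ↔ B ∈ Δ'.1) ∧
      (∀ Δ' : Th, some Δ' ∈ p.2 ↔ C ∈ Δ'.1)}

def canM : NbModel where
  W := canW
  g := none
  NB := canNB
  sub := by
    intro w X Y h
    cases w with
    | none => exact h
    | some Δ => exact Or.inl h
  rootNB := fun X Y => Iff.rfl
  V := fun p w => match w with | none => False | some Δ => Fm.var p ∈ Δ.1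

lemma thB_theory (B : Fm) : IsTheory {E | WFThm (B.imp E)} :=
  ⟨fun A h => WFThm.afort B h, fun A C hA hAC => WFThm.trans hA hAC⟩

def thB (B : Fm) : Th := ⟨{E | WFThm (B.imp E)}, thB_theory B⟩

/-- Truth lemma for the canonical model. -/
lemma truth_lemma : ∀ (E : Fm) (Δ : Th),
    (some Δ : canM.W) ∈ truthSet canM E ↔ E ∈ Δ.1 := by
  intro E
  induction E with
  | var p => exact fun Δ => Iff.rfl
  | imp B C ihB ihC =>
    intro Δ
    refine mem_truthSet_imp.trans ?_
    show (_ ∨ _) ↔ _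
    constructor
    · rintro (hsub | ⟨B', C', hmem, hB, hC⟩)
      · -- truthSet B ⊆ truthSet C implies WFThm (B.imp C)
        have hBC : WFThm (B.imp C) := by
          have h1 : (some (thB B) : canM.W) ∈ truthSet canM B :=
            (ihB (thB B)).2 (WFThm.id B)
          exact (ihC (thB B)).1 (hsub h1)
        exact Δ.2.1 _ hBC
      · -- the pair comes from some B'→C' ∈ Δ with same truth sets
        have eB : ∀ Δ' : Th, B ∈ Δ'.1 ↔ B' ∈ Δ'.1 :=
          fun Δ' => (ihB Δ').symm.trans (hB Δ')
        have eC : ∀ Δ' : Th, C ∈ Δ'.1 ↔ C' ∈ Δ'.1 :=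
          fun Δ' => (ihC Δ').symm.trans (hC Δ')
        have hBB' : WFThm (B.imp B') := (eB (thB B)).1 (WFThm.id B)
        have hB'B : WFThm (B'.imp B) := (eB (thB B')).2 (WFThm.id B')
        have hCC' : WFThm (C.imp C') := (eC (thB C)).1 (WFThm.id C)
        have hC'C : WFThm (C'.imp C) := (eC (thB C')).2 (WFThm.id C')
        have hkey : WFThm ((Fm.imp B' C').imp (Fm.imp B C)) :=
          WFThm.equiv hB'B hBB' hC'C hCC'
        exact Δ.2.2 _ _ hmem hkey
    · intro h
      refine Or.inr ⟨B, C, h, fun Δ' => ihB Δ', fun Δ' => ihC Δ'⟩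

/-- Strong soundness and completeness of `WF_[→]` with respect to neighborhood models. -/
theorem soundness_completeness_WF (S : Set Fm) (A : Fm) :
    WFDeriv S A ↔
      ∀ (M : NbModel) (w : M.W), (∀ B ∈ S, w ∈ truthSet M B) → w ∈ truthSet M A := by
  constructor
  · intro h M w hw
    induction h with
    | hyp hA => exact hw _ hA
    | thm hA => exact thm_valid hA M w
    | wmp hA hAB ih => exact (M.rootNB _ _).1 (thm_valid hAB M M.g) ih
  · intro h
    have hTh : IsTheory {E | WFDeriv S E} :=
      ⟨fun A h => WFDeriv.thm h, fun A B hA hAB => WFDeriv.wmp hA hAB⟩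
    set Δ : Th := ⟨{E | WFDeriv S E}, hTh⟩ with hΔ
    have hforces : ∀ B ∈ S, (some Δ : canM.W) ∈ truthSet canM B := by
      intro B hB
      exact (truth_lemma B Δ).2 (WFDeriv.hyp hB)
    exact (truth_lemma A Δ).1 (h canM (some Δ) hforces)
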